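/- The derivative λ' is strictly convex on (0, 1] and strictly concave on [1, ∞); in fact λ'''(x) = 3(1 + 5x² − 5x⁴ − x⁶)/(8(x + x³)^{5/2}), so λ'''(x) > 0 for 0 < x < 1, λ'''(1) = 0, and λ'''(x) < 0 for x > 1. -/

import Mathlib

/-!
`lam` is the gravity–capillary dispersion relation λ(x) = √(x + x³) (with g = σ = 1);
λ', λ'', λ''' are its derivatives on (0, ∞).
-/

noncomputable section

open Real Set

/-- The dispersion relation λ(x) = √(x + x³). -/
def lam (x : ℝ) : ℝ := Real.sqrt (x + x ^ 3)

/-- First derivative of `lam` (valid on `(0,∞)`). -/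
def g1 (x : ℝ) : ℝ := (1 + 3 * x ^ 2) / (2 * Real.sqrt (x + x ^ 3))

/-- Second derivative of `lam` (valid on `(0,∞)`). -/
def g2 (x : ℝ) : ℝ := (3 * x ^ 4 + 6 * x ^ 2 - 1) / (4 * Real.sqrt (x + x ^ 3) ^ 3)

/-- Third derivative of `lam` (valid on `(0,∞)`). -/
def g3 (x : ℝ) : ℝ := 3 * (1 + 5 * x ^ 2 - 5 * x ^ 4 - x ^ 6) / (8 * Real.sqrt (x + x ^ 3) ^ 5)

lemma upos {x : ℝ} (hx : 0 < x) : 0 < x + x ^ 3 := by positivity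

lemma spos {x : ℝ} (hx : 0 < x) : 0 < Real.sqrt (x + x ^ 3) := Real.sqrt_pos.2 (upos hx)

lemma ssq {x : ℝ} (hx : 0 < x) : Real.sqrt (x + x ^ 3) ^ 2 = x + x ^ 3 :=
  Real.sq_sqrt (upos hx).le

lemma hu (x : ℝ) : HasDerivAt (fun y : ℝ => y + y ^ 3) (1 + 3 * x ^ 2) x := by
  exact ((hasDerivAt_id' x).add (hasDerivAt_pow 3 x)).congr_deriv (by norm_num)

lemma hs {x : ℝ} (hx : 0 < x) :
    HasDerivAt (fun y : ℝ => Real.sqrt (y + y ^ 3))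
      ((1 + 3 * x ^ 2) / (2 * Real.sqrt (x + x ^ 3))) x := by
  have := (Real.hasDerivAt_sqrt (upos hx).ne').comp x (hu x)
  exact this.congr_deriv (by ring)

lemma dlam {x : ℝ} (hx : 0 < x) : HasDerivAt lam (g1 x) x := hs hx

lemma dg1 {x : ℝ} (hx : 0 < x) : HasDerivAt g1 (g2 x) x := by
  have hnum : HasDerivAt (fun y : ℝ => 1 + 3 * y ^ 2) (6 * x) x := by
    have h0 := ((hasDerivAt_pow 2 x).const_mul 3).const_add 1
    norm_num at h0 ⊢
    exact h0.congr_deriv (by ring)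
  have hden : HasDerivAt (fun y : ℝ => 2 * Real.sqrt (y + y ^ 3))
      (2 * ((1 + 3 * x ^ 2) / (2 * Real.sqrt (x + x ^ 3)))) x := (hs hx).const_mul 2
  have h := hnum.div hden (by have := spos hx; positivity)
  refine h.congr_deriv ?_; symm
  have h2 := ssq hx
  have hsne := (spos hx).ne'
  rw [g2]; generalize Real.sqrt (x + x ^ 3) = s at h2 hsne ⊢
  field_simp
  linear_combination (-48*x) * h2

lemma dg2 {x : ℝ} (hx : 0 < x) : HasDerivAt g2 (g3 x) x := by
  have hnum : HasDerivAt (fun y : ℝ => 3 * y ^ 4 + 6 * y ^ 2 - 1) (12 * x ^ 3 + 12 * x) x := by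
    have h0 := (((hasDerivAt_pow 4 x).const_mul 3).add
      ((hasDerivAt_pow 2 x).const_mul 6)).sub_const 1
    norm_num at h0 ⊢
    exact h0.congr_deriv (by ring)
  have hden : HasDerivAt (fun y : ℝ => 4 * Real.sqrt (y + y ^ 3) ^ 3)
      (4 * (3 * Real.sqrt (x + x ^ 3) ^ 2 * ((1 + 3 * x ^ 2) / (2 * Real.sqrt (x + x ^ 3))))) x :=
    (((hs hx).pow 3).const_mul 4).congr_deriv (by ring)
  have h := hnum.div hden (by have := spos hx; positivity)
  refine h.congr_deriv ?_; symm
  have h2 := ssq hx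
  have hsne := (spos hx).ne'
  rw [g3]; generalize Real.sqrt (x + x ^ 3) = s at h2 hsne ⊢
  field_simp
  linear_combination (-192*x*(x^2+1)) * h2

lemma deriv_lam_eq {x : ℝ} (hx : 0 < x) : deriv lam x = g1 x := (dlam hx).deriv

lemma deriv2_lam_eq {x : ℝ} (hx : 0 < x) : deriv (deriv lam) x = g2 x := by
  have hev : deriv lam =ᶠ[nhds x] g1 := by
    filter_upwards [Ioi_mem_nhds hx] with y hy
    exact deriv_lam_eq hy
  rw [hev.deriv_eq]
  exact (dg1 hx).deriv

lemma deriv3_lam_eq {x : ℝ} (hx : 0 < x) : deriv (deriv (deriv lam)) x = g3 x := by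
  have hev : deriv (deriv lam) =ᶠ[nhds x] g2 := by
    filter_upwards [Ioi_mem_nhds hx] with y hy
    exact deriv2_lam_eq hy
  rw [hev.deriv_eq]
  exact (dg2 hx).deriv

lemma rpow_eq {x : ℝ} (hx : 0 < x) :
    (x + x ^ 3) ^ ((5 : ℝ) / 2) = Real.sqrt (x + x ^ 3) ^ 5 := by
  rw [← Real.rpow_natCast (Real.sqrt (x + x ^ 3)) 5, Real.sqrt_eq_rpow,
    ← Real.rpow_mul (upos hx).le]
  norm_num

lemma g3_pos {x : ℝ} (hx : 0 < x) (hx1 : x < 1) : 0 < g3 x := by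
  apply div_pos
  · have h1 : x ^ 2 < 1 := by nlinarith
    nlinarith [mul_pos (sub_pos.2 h1) (show (0:ℝ) < 1 + 6 * x ^ 2 + x ^ 4 by positivity)]
  · have := spos hx; positivity

lemma g3_neg {x : ℝ} (hx1 : 1 < x) : g3 x < 0 := by
  have hx : 0 < x := lt_trans one_pos hx1
  apply div_neg_of_neg_of_pos
  · have h1 : 1 < x ^ 2 := by nlinarith
    nlinarith [mul_pos (sub_pos.2 h1) (show (0:ℝ) < 1 + 6 * x ^ 2 + x ^ 4 by positivity)]
  · have := spos hx; positivity

lemma cont_g1 : ContinuousOn g1 (Ioi 0) := by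
  apply ContinuousOn.div
  · fun_prop
  · fun_prop
  · intro y hy
    have := spos (mem_Ioi.1 hy)
    positivity

lemma cont_deriv_lam : ContinuousOn (deriv lam) (Ioi 0) :=
  cont_g1.congr fun y hy => deriv_lam_eq (mem_Ioi.1 hy)

/-- λ''' has the stated formula, is positive on (0,1), vanishes at 1 and is negative on
(1, ∞); consequently λ' is strictly convex on (0, 1] and strictly concave on [1, ∞). -/
theorem stmt2 :
    (∀ x : ℝ, 0 < x → deriv (deriv (deriv lam)) x =
      3 * (1 + 5 * x ^ 2 - 5 * x ^ 4 - x ^ 6) / (8 * (x + x ^ 3) ^ ((5 : ℝ) / 2))) ∧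
    (∀ x : ℝ, 0 < x → x < 1 → 0 < deriv (deriv (deriv lam)) x) ∧
    deriv (deriv (deriv lam)) 1 = 0 ∧
    (∀ x : ℝ, 1 < x → deriv (deriv (deriv lam)) x < 0) ∧
    StrictConvexOn ℝ (Ioc 0 1) (deriv lam) ∧
    StrictConcaveOn ℝ (Ici 1) (deriv lam) := by
  refine ⟨fun x hx => ?_, fun x hx hx1 => ?_, ?_, fun x hx1 => ?_, ?_, ?_⟩
  · rw [deriv3_lam_eq hx, g3, rpow_eq hx]
  · rw [deriv3_lam_eq hx]; exact g3_pos hx hx1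
  · rw [deriv3_lam_eq one_pos]
    norm_num [g3]
  · rw [deriv3_lam_eq (lt_trans one_pos hx1)]; exact g3_neg hx1
  · apply strictConvexOn_of_deriv2_pos (convex_Ioc 0 1)
      (cont_deriv_lam.mono (fun y hy => hy.1))
    intro y hy
    rw [interior_Ioc] at hy
    show 0 < deriv (deriv (deriv lam)) y
    rw [deriv3_lam_eq hy.1]
    exact g3_pos hy.1 hy.2
  · apply strictConcaveOn_of_deriv2_neg (convex_Ici 1)
      (cont_deriv_lam.mono (fun y hy => mem_Ioi.2 (lt_of_lt_of_le one_pos hy)))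
    intro y hy
    rw [interior_Ici] at hy
    show deriv (deriv (deriv lam)) y < 0
    rw [deriv3_lam_eq (lt_trans one_pos hy)]
    exact g3_neg hy
end
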